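/- For every n ≥ 1, every ε ∈ {0,1}, and all j, k ∈ I_n with binary expansions j = (j_1,…,j_n)_2 and k = (k_1,…,k_n)_2: the (j,k) entry of the BBS generator matrix (a^{(n)} if ε = 0, b^{(n)} if ε = 1) equals the residue mod 2 of the product (j_1+1+ε)(j_2+1+k_1)(j_3+1+k_2)⋯(j_n+1+k_{n-1}), and the (j,k) entry of the lamplighter generator matrix (a_L^{(n)} if ε = 0, b_L^{(n)} if ε = 1) equals the residue mod 2 of the product (j_1+k_1+ε)(j_2+k_2+k_1)(j_3+k_3+k_2)⋯(j_n+k_n+k_{n-1}). -/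

import Mathlib

open Matrix

/-- Equivalence identifying `Fin (2^n) ⊕ Fin (2^n)` with `Fin (2^(n+1))`. -/
def blockEquiv (n : ℕ) : Fin (2 ^ n) ⊕ Fin (2 ^ n) ≃ Fin (2 ^ (n + 1)) :=
  finSumFinEquiv.trans (finCongr (by rw [pow_succ, mul_two]))

/-- Assemble a `2^(n+1) × 2^(n+1)` matrix from four `2^n × 2^n` blocks. -/
noncomputable def mkBlock {n : ℕ} (A B C D : Matrix (Fin (2 ^ n)) (Fin (2 ^ n)) ℝ) :
    Matrix (Fin (2 ^ (n + 1))) (Fin (2 ^ (n + 1))) ℝ :=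
  Matrix.reindex (blockEquiv n) (blockEquiv n) (Matrix.fromBlocks A B C D)

/-- The pair of BBS translation generators. -/
noncomputable def abB : (n : ℕ) →
    Matrix (Fin (2 ^ n)) (Fin (2 ^ n)) ℝ × Matrix (Fin (2 ^ n)) (Fin (2 ^ n)) ℝ
  | 0 => (1, 1)
  | n + 1 => (mkBlock (abB n).1 (abB n).2 0 0, mkBlock 0 0 (abB n).1 (abB n).2)

noncomputable def aB (n : ℕ) : Matrix (Fin (2 ^ n)) (Fin (2 ^ n)) ℝ := (abB n).1
noncomputable def bB (n : ℕ) : Matrix (Fin (2 ^ n)) (Fin (2 ^ n)) ℝ := (abB n).2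

/-- The pair of lamplighter generators. -/
noncomputable def abL : (n : ℕ) →
    Matrix (Fin (2 ^ n)) (Fin (2 ^ n)) ℝ × Matrix (Fin (2 ^ n)) (Fin (2 ^ n)) ℝ
  | 0 => (1, 1)
  | n + 1 => (mkBlock 0 (abL n).2 (abL n).1 0, mkBlock (abL n).1 0 0 (abL n).2)

noncomputable def aL (n : ℕ) : Matrix (Fin (2 ^ n)) (Fin (2 ^ n)) ℝ := (abL n).1
noncomputable def bL (n : ℕ) : Matrix (Fin (2 ^ n)) (Fin (2 ^ n)) ℝ := (abL n).2

/-- The BBS translation transition operator. -/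
noncomputable def MB (n : ℕ) : Matrix (Fin (2 ^ n)) (Fin (2 ^ n)) ℝ :=
  (1 / 4 : ℝ) • (aB n + (aB n)ᵀ + bB n + (bB n)ᵀ)

/-- The lamplighter transition operator. -/
noncomputable def ML (n : ℕ) : Matrix (Fin (2 ^ n)) (Fin (2 ^ n)) ℝ :=
  (1 / 4 : ℝ) • (aL n + (aL n)ᵀ + bL n + (bL n)ᵀ)

/-- The `j`-th binary digit (`1 ≤ j ≤ n`, most significant first) of `c ∈ {0, …, 2ⁿ−1}`:
`c = Σ_{j=1}^n c_j 2^{n−j}`. -/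
def digit (n c j : ℕ) : ℕ := c / 2 ^ (n - j) % 2

/-- Explicit entry formulas for the BBS and lamplighter generators:
for `ε ∈ {0, 1}` and `j, k ∈ Iₙ` with binary digits `j_i`, `k_i`,
the `(j, k)` entry of the BBS generator (`a⁽ⁿ⁾` if `ε = 0`, `b⁽ⁿ⁾` if `ε = 1`) is
`(j_1+1+ε)(j_2+1+k_1)⋯(j_n+1+k_{n-1}) mod 2`, and that of the lamplighter generator is
`(j_1+k_1+ε)(j_2+k_2+k_1)⋯(j_n+k_n+k_{n-1}) mod 2`. -/

-- ## Auxiliary lemmas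

lemma blockEquiv_inl_val (n : ℕ) (i : Fin (2 ^ n)) :
    ((blockEquiv n (Sum.inl i)) : ℕ) = (i : ℕ) := by
  simp [blockEquiv]

lemma blockEquiv_inr_val (n : ℕ) (i : Fin (2 ^ n)) :
    ((blockEquiv n (Sum.inr i)) : ℕ) = 2 ^ n + (i : ℕ) := by
  simp [blockEquiv]; omega

lemma mkBlock_apply (n : ℕ) (A B C D : Matrix (Fin (2^n)) (Fin (2^n)) ℝ) (x y) :
    mkBlock A B C D (blockEquiv n x) (blockEquiv n y) = Matrix.fromBlocks A B C D x y := by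
  simp [mkBlock]

lemma digit_one_lo (n c : ℕ) (hc : c < 2 ^ n) : digit (n+1) c 1 = 0 := by
  unfold digit
  rw [Nat.add_sub_cancel, Nat.div_eq_of_lt hc]

lemma digit_one_hi (n c : ℕ) (hc : c < 2 ^ n) : digit (n+1) (2 ^ n + c) 1 = 1 := by
  unfold digit
  rw [Nat.add_sub_cancel, add_comm, Nat.add_div_right _ (Nat.two_pow_pos n),
    Nat.div_eq_of_lt hc]

lemma digit_lo (n c i : ℕ) (hi : 1 ≤ i) : digit (n+1) c i = digit n c (i-1) := by
  unfold digit
  have h : n + 1 - i = n - (i-1) := by omega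
  rw [h]

lemma digit_hi (n c i : ℕ) (hi : 2 ≤ i) (hi' : i ≤ n+1) :
    digit (n+1) (2 ^ n + c) i = digit n c (i-1) := by
  unfold digit
  have h1 : n + 1 - i = n - (i-1) := by omega
  have h2 : 2 ^ n = (2 ^ (i-2) * 2) * 2 ^ (n+1-i) := by
    rw [mul_assoc, ← pow_succ', ← pow_add]
    congr 1
    omega
  rw [h2, add_comm, Nat.add_mul_div_right _ _ (Nat.two_pow_pos _),
    Nat.add_mul_mod_self_right, h1]

lemma prod_shift (n : ℕ) (hn : 1 ≤ n) (f : ℕ → ℕ) :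
    ∏ i ∈ Finset.Icc 2 (n+1), f i = f 2 * ∏ i ∈ Finset.Icc 2 n, f (i+1) := by
  have h1 : Finset.Icc 2 (n+1) = insert 2 ((Finset.Icc 2 n).image (· + 1)) := by
    ext x
    simp only [Finset.mem_Icc, Finset.mem_insert, Finset.mem_image]
    constructor
    · rintro ⟨h2, h3⟩
      rcases eq_or_lt_of_le h2 with h | h
      · exact Or.inl h.symm
      · exact Or.inr ⟨x - 1, by omega, by omega⟩
    · rintro (rfl | ⟨a, ha, rfl⟩) <;> omega
  rw [h1, Finset.prod_insert, Finset.prod_image]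
  · intro a _ b _ h; simp only at h; omega
  · simp only [Finset.mem_image, Finset.mem_Icc]
    rintro ⟨a, ha, h⟩; omega

/-- The BBS entry formula. -/
def FB (n ε j k : ℕ) : ℕ :=
  ((digit n j 1 + 1 + ε) * ∏ i ∈ Finset.Icc 2 n, (digit n j i + 1 + digit n k (i - 1))) % 2

/-- The lamplighter entry formula. -/
def FL (n ε j k : ℕ) : ℕ :=
  ((digit n j 1 + digit n k 1 + ε) *
    ∏ i ∈ Finset.Icc 2 n, (digit n j i + digit n k i + digit n k (i - 1))) % 2

lemma digit_split_one (n c1 c : ℕ) (hc1 : c1 < 2) (hc : c < 2 ^ n) :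
    digit (n+1) (c1 * 2^n + c) 1 = c1 := by
  interval_cases c1
  · simpa using digit_one_lo n c hc
  · simpa using digit_one_hi n c hc

lemma digit_split (n c1 c i : ℕ) (hc1 : c1 < 2) (hc : c < 2 ^ n) (hi : 2 ≤ i) (hi' : i ≤ n+1) :
    digit (n+1) (c1 * 2^n + c) i = digit n c (i-1) := by
  interval_cases c1
  · simpa using digit_lo n c i (by omega)
  · simpa using digit_hi n c i hi hi'

lemma mod2_mul (a b : ℕ) : (a * b) % 2 = (a % 2) * (b % 2) := by
  rw [Nat.mul_mod]
  exact Nat.mod_eq_of_lt (by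
    have h1 : a % 2 ≤ 1 := by omega
    have h2 : b % 2 ≤ 1 := by omega
    calc a % 2 * (b % 2) ≤ 1 * 1 := Nat.mul_le_mul h1 h2
    _ < 2 := by norm_num)

lemma FB_rec (n ε c1 d1 c d J K : ℕ) (hn : 1 ≤ n) (hc1 : c1 < 2) (hd1 : d1 < 2)
    (hc : c < 2^n) (hd : d < 2^n) (hJ : J = c1 * 2^n + c) (hK : K = d1 * 2^n + d) :
    FB (n+1) ε J K = ((c1 + 1 + ε) % 2) * FB n d1 c d := by
  subst hJ hK
  unfold FB
  have h2 : digit (n+1) (c1*2^n+c) 2 = digit n c 1 := by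
    simpa using digit_split n c1 c 2 hc1 hc (le_refl 2) (by omega)
  have h2' : digit (n+1) (d1*2^n+d) (2-1) = d1 := digit_split_one n d1 d hd1 hd
  have hprod : ∏ i ∈ Finset.Icc 2 n,
      (digit (n+1) (c1*2^n+c) (i+1) + 1 + digit (n+1) (d1*2^n+d) (i+1-1))
      = ∏ i ∈ Finset.Icc 2 n, (digit n c i + 1 + digit n d (i-1)) := by
    refine Finset.prod_congr rfl ?_
    intro i hi
    simp only [Finset.mem_Icc] at hi
    rw [digit_split n c1 c (i+1) hc1 hc (by omega) (by omega),
      show i + 1 - 1 = i from rfl,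
      digit_split n d1 d i hd1 hd (by omega) (by omega)]
  rw [digit_split_one n c1 c hc1 hc, prod_shift n hn, h2, h2', hprod, mod2_mul (c1+1+ε)]

lemma FL_rec (n ε c1 d1 c d J K : ℕ) (hn : 1 ≤ n) (hc1 : c1 < 2) (hd1 : d1 < 2)
    (hc : c < 2^n) (hd : d < 2^n) (hJ : J = c1 * 2^n + c) (hK : K = d1 * 2^n + d) :
    FL (n+1) ε J K = ((c1 + d1 + ε) % 2) * FL n d1 c d := by
  subst hJ hK
  unfold FL
  have h2 : digit (n+1) (c1*2^n+c) 2 = digit n c 1 := by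
    simpa using digit_split n c1 c 2 hc1 hc (le_refl 2) (by omega)
  have h2k : digit (n+1) (d1*2^n+d) 2 = digit n d 1 := by
    simpa using digit_split n d1 d 2 hd1 hd (le_refl 2) (by omega)
  have h2' : digit (n+1) (d1*2^n+d) (2-1) = d1 := digit_split_one n d1 d hd1 hd
  have hprod : ∏ i ∈ Finset.Icc 2 n,
      (digit (n+1) (c1*2^n+c) (i+1) + digit (n+1) (d1*2^n+d) (i+1)
        + digit (n+1) (d1*2^n+d) (i+1-1))
      = ∏ i ∈ Finset.Icc 2 n, (digit n c i + digit n d i + digit n d (i-1)) := by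
    refine Finset.prod_congr rfl ?_
    intro i hi
    simp only [Finset.mem_Icc] at hi
    simp only [Nat.add_sub_cancel]
    rw [digit_split n c1 c (i+1) hc1 hc (by omega) (by omega),
      digit_split n d1 d (i+1) hd1 hd (by omega) (by omega),
      digit_split n d1 d i hd1 hd (by omega) (by omega)]
    simp
  rw [digit_split_one n c1 c hc1 hc, digit_split_one n d1 d hd1 hd, prod_shift n hn,
    h2, h2k, h2', hprod, mod2_mul (c1+d1+ε)]

lemma aB_zero : aB 0 = 1 := rfl
lemma bB_zero : bB 0 = 1 := rfl
lemma aL_zero : aL 0 = 1 := rfl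
lemma bL_zero : bL 0 = 1 := rfl
lemma aB_succ (n : ℕ) : aB (n+1) = mkBlock (aB n) (bB n) 0 0 := rfl
lemma bB_succ (n : ℕ) : bB (n+1) = mkBlock 0 0 (aB n) (bB n) := rfl
lemma aL_succ (n : ℕ) : aL (n+1) = mkBlock 0 (bL n) (aL n) 0 := rfl
lemma bL_succ (n : ℕ) : bL (n+1) = mkBlock (aL n) 0 0 (bL n) := rfl

lemma fin_pow_zero_val (i : Fin (2^0)) : (i : ℕ) = 0 := by
  have := i.isLt; norm_num at this; omega

lemma keyB : ∀ n, 1 ≤ n → ∀ ε, ε = 0 ∨ ε = 1 → ∀ (j k : Fin (2 ^ n)),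
    (if ε = 0 then aB n else bB n) j k = (FB n ε (j : ℕ) (k : ℕ) : ℝ) := by
  intro n hn
  induction n, hn using Nat.le_induction with
  | base =>
    intro ε hε j k
    obtain ⟨x, rfl⟩ : ∃ x, j = blockEquiv 0 x := ⟨(blockEquiv 0).symm j, (Equiv.apply_symm_apply _ _).symm⟩
    obtain ⟨y, rfl⟩ : ∃ y, k = blockEquiv 0 y := ⟨(blockEquiv 0).symm k, (Equiv.apply_symm_apply _ _).symm⟩
    have hone : ∀ (M : Matrix (Fin (2^0)) (Fin (2^0)) ℝ) (i i' : Fin (2^0)), M = 1 → M i i' = 1 := by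
      intro M i i' hM
      have h : i = i' := by
        apply Fin.ext; rw [fin_pow_zero_val, fin_pow_zero_val]
      rw [hM, h, Matrix.one_apply_eq]
    have hIcc : Finset.Icc 2 1 = (∅ : Finset ℕ) := Finset.Icc_eq_empty (by omega)
    rcases hε with rfl | rfl
    · rw [if_pos rfl]
      rcases x with i | i <;> rcases y with i' | i' <;>
        simp only [aB_succ, mkBlock_apply, Matrix.fromBlocks_apply₁₁,
          Matrix.fromBlocks_apply₁₂, Matrix.fromBlocks_apply₂₁, Matrix.fromBlocks_apply₂₂,
          Matrix.zero_apply, blockEquiv_inl_val, blockEquiv_inr_val, fin_pow_zero_val] <;>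
        (try rw [hone _ i i' aB_zero]) <;> (try rw [hone _ i i' bB_zero]) <;>
        norm_num [FB, digit, hIcc]
    · rw [if_neg Nat.one_ne_zero]
      rcases x with i | i <;> rcases y with i' | i' <;>
        simp only [bB_succ, mkBlock_apply, Matrix.fromBlocks_apply₁₁,
          Matrix.fromBlocks_apply₁₂, Matrix.fromBlocks_apply₂₁, Matrix.fromBlocks_apply₂₂,
          Matrix.zero_apply, blockEquiv_inl_val, blockEquiv_inr_val, fin_pow_zero_val] <;>
        (try rw [hone _ i i' aB_zero]) <;> (try rw [hone _ i i' bB_zero]) <;>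
        norm_num [FB, digit, hIcc]
  | succ n hn IH =>
    intro ε hε j k
    obtain ⟨x, rfl⟩ : ∃ x, j = blockEquiv n x := ⟨(blockEquiv n).symm j, (Equiv.apply_symm_apply _ _).symm⟩
    obtain ⟨y, rfl⟩ : ∃ y, k = blockEquiv n y := ⟨(blockEquiv n).symm k, (Equiv.apply_symm_apply _ _).symm⟩
    have hA : ∀ (j k : Fin (2^n)), aB n j k = (FB n 0 (j:ℕ) (k:ℕ) : ℝ) := by
      intro j k; have := IH 0 (Or.inl rfl) j k; rwa [if_pos rfl] at this
    have hB : ∀ (j k : Fin (2^n)), bB n j k = (FB n 1 (j:ℕ) (k:ℕ) : ℝ) := by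
      intro j k; have := IH 1 (Or.inr rfl) j k; rwa [if_neg Nat.one_ne_zero] at this
    rcases hε with rfl | rfl
    · rw [if_pos rfl]
      rcases x with i | i <;> rcases y with i' | i' <;>
        simp only [aB_succ, mkBlock_apply, Matrix.fromBlocks_apply₁₁,
          Matrix.fromBlocks_apply₁₂, Matrix.fromBlocks_apply₂₁, Matrix.fromBlocks_apply₂₂,
          Matrix.zero_apply, blockEquiv_inl_val, blockEquiv_inr_val]
      · rw [FB_rec n 0 0 0 i i' _ _ hn (by norm_num) (by norm_num) i.isLt i'.isLt
          (by ring) (by ring)]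
        simpa using hA i i'
      · rw [FB_rec n 0 0 1 i i' _ _ hn (by norm_num) (by norm_num) i.isLt i'.isLt
          (by ring) (by ring)]
        simpa using hB i i'
      · rw [FB_rec n 0 1 0 i i' _ _ hn (by norm_num) (by norm_num) i.isLt i'.isLt
          (by ring) (by ring)]
        norm_num
      · rw [FB_rec n 0 1 1 i i' _ _ hn (by norm_num) (by norm_num) i.isLt i'.isLt
          (by ring) (by ring)]
        norm_num
    · rw [if_neg Nat.one_ne_zero]
      rcases x with i | i <;> rcases y with i' | i' <;>
        simp only [bB_succ, mkBlock_apply, Matrix.fromBlocks_apply₁₁,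
          Matrix.fromBlocks_apply₁₂, Matrix.fromBlocks_apply₂₁, Matrix.fromBlocks_apply₂₂,
          Matrix.zero_apply, blockEquiv_inl_val, blockEquiv_inr_val]
      · rw [FB_rec n 1 0 0 i i' _ _ hn (by norm_num) (by norm_num) i.isLt i'.isLt
          (by ring) (by ring)]
        norm_num
      · rw [FB_rec n 1 0 1 i i' _ _ hn (by norm_num) (by norm_num) i.isLt i'.isLt
          (by ring) (by ring)]
        norm_num
      · rw [FB_rec n 1 1 0 i i' _ _ hn (by norm_num) (by norm_num) i.isLt i'.isLt
          (by ring) (by ring)]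
        simpa using hA i i'
      · rw [FB_rec n 1 1 1 i i' _ _ hn (by norm_num) (by norm_num) i.isLt i'.isLt
          (by ring) (by ring)]
        simpa using hB i i'

lemma keyL : ∀ n, 1 ≤ n → ∀ ε, ε = 0 ∨ ε = 1 → ∀ (j k : Fin (2 ^ n)),
    (if ε = 0 then aL n else bL n) j k = (FL n ε (j : ℕ) (k : ℕ) : ℝ) := by
  intro n hn
  induction n, hn using Nat.le_induction with
  | base =>
    intro ε hε j k
    obtain ⟨x, rfl⟩ : ∃ x, j = blockEquiv 0 x := ⟨(blockEquiv 0).symm j, (Equiv.apply_symm_apply _ _).symm⟩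
    obtain ⟨y, rfl⟩ : ∃ y, k = blockEquiv 0 y := ⟨(blockEquiv 0).symm k, (Equiv.apply_symm_apply _ _).symm⟩
    have hone : ∀ (M : Matrix (Fin (2^0)) (Fin (2^0)) ℝ) (i i' : Fin (2^0)), M = 1 → M i i' = 1 := by
      intro M i i' hM
      have h : i = i' := by
        apply Fin.ext; rw [fin_pow_zero_val, fin_pow_zero_val]
      rw [hM, h, Matrix.one_apply_eq]
    have hIcc : Finset.Icc 2 1 = (∅ : Finset ℕ) := Finset.Icc_eq_empty (by omega)
    rcases hε with rfl | rfl
    · rw [if_pos rfl]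
      rcases x with i | i <;> rcases y with i' | i' <;>
        simp only [aL_succ, mkBlock_apply, Matrix.fromBlocks_apply₁₁,
          Matrix.fromBlocks_apply₁₂, Matrix.fromBlocks_apply₂₁, Matrix.fromBlocks_apply₂₂,
          Matrix.zero_apply, blockEquiv_inl_val, blockEquiv_inr_val, fin_pow_zero_val] <;>
        (try rw [hone _ i i' aL_zero]) <;> (try rw [hone _ i i' bL_zero]) <;>
        norm_num [FL, digit, hIcc]
    · rw [if_neg Nat.one_ne_zero]
      rcases x with i | i <;> rcases y with i' | i' <;>
        simp only [bL_succ, mkBlock_apply, Matrix.fromBlocks_apply₁₁,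
          Matrix.fromBlocks_apply₁₂, Matrix.fromBlocks_apply₂₁, Matrix.fromBlocks_apply₂₂,
          Matrix.zero_apply, blockEquiv_inl_val, blockEquiv_inr_val, fin_pow_zero_val] <;>
        (try rw [hone _ i i' aL_zero]) <;> (try rw [hone _ i i' bL_zero]) <;>
        norm_num [FL, digit, hIcc]
  | succ n hn IH =>
    intro ε hε j k
    obtain ⟨x, rfl⟩ : ∃ x, j = blockEquiv n x := ⟨(blockEquiv n).symm j, (Equiv.apply_symm_apply _ _).symm⟩
    obtain ⟨y, rfl⟩ : ∃ y, k = blockEquiv n y := ⟨(blockEquiv n).symm k, (Equiv.apply_symm_apply _ _).symm⟩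
    have hA : ∀ (j k : Fin (2^n)), aL n j k = (FL n 0 (j:ℕ) (k:ℕ) : ℝ) := by
      intro j k; have := IH 0 (Or.inl rfl) j k; rwa [if_pos rfl] at this
    have hB : ∀ (j k : Fin (2^n)), bL n j k = (FL n 1 (j:ℕ) (k:ℕ) : ℝ) := by
      intro j k; have := IH 1 (Or.inr rfl) j k; rwa [if_neg Nat.one_ne_zero] at this
    rcases hε with rfl | rfl
    · rw [if_pos rfl]
      rcases x with i | i <;> rcases y with i' | i' <;>
        simp only [aL_succ, mkBlock_apply, Matrix.fromBlocks_apply₁₁,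
          Matrix.fromBlocks_apply₁₂, Matrix.fromBlocks_apply₂₁, Matrix.fromBlocks_apply₂₂,
          Matrix.zero_apply, blockEquiv_inl_val, blockEquiv_inr_val]
      · rw [FL_rec n 0 0 0 i i' _ _ hn (by norm_num) (by norm_num) i.isLt i'.isLt
          (by ring) (by ring)]
        norm_num
      · rw [FL_rec n 0 0 1 i i' _ _ hn (by norm_num) (by norm_num) i.isLt i'.isLt
          (by ring) (by ring)]
        simpa using hB i i'
      · rw [FL_rec n 0 1 0 i i' _ _ hn (by norm_num) (by norm_num) i.isLt i'.isLt
          (by ring) (by ring)]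
        simpa using hA i i'
      · rw [FL_rec n 0 1 1 i i' _ _ hn (by norm_num) (by norm_num) i.isLt i'.isLt
          (by ring) (by ring)]
        norm_num
    · rw [if_neg Nat.one_ne_zero]
      rcases x with i | i <;> rcases y with i' | i' <;>
        simp only [bL_succ, mkBlock_apply, Matrix.fromBlocks_apply₁₁,
          Matrix.fromBlocks_apply₁₂, Matrix.fromBlocks_apply₂₁, Matrix.fromBlocks_apply₂₂,
          Matrix.zero_apply, blockEquiv_inl_val, blockEquiv_inr_val]
      · rw [FL_rec n 1 0 0 i i' _ _ hn (by norm_num) (by norm_num) i.isLt i'.isLt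
          (by ring) (by ring)]
        simpa using hA i i'
      · rw [FL_rec n 1 0 1 i i' _ _ hn (by norm_num) (by norm_num) i.isLt i'.isLt
          (by ring) (by ring)]
        norm_num
      · rw [FL_rec n 1 1 0 i i' _ _ hn (by norm_num) (by norm_num) i.isLt i'.isLt
          (by ring) (by ring)]
        norm_num
      · rw [FL_rec n 1 1 1 i i' _ _ hn (by norm_num) (by norm_num) i.isLt i'.isLt
          (by ring) (by ring)]
        simpa using hB i i'

theorem generator_entries (n : ℕ) (hn : 1 ≤ n) (ε : ℕ) (hε : ε = 0 ∨ ε = 1)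
    (j k : Fin (2 ^ n)) :
    (if ε = 0 then aB n else bB n) j k
        = (((digit n (j : ℕ) 1 + 1 + ε) *
            ∏ i ∈ Finset.Icc 2 n, (digit n (j : ℕ) i + 1 + digit n (k : ℕ) (i - 1))) % 2 : ℕ) ∧
      (if ε = 0 then aL n else bL n) j k
        = (((digit n (j : ℕ) 1 + digit n (k : ℕ) 1 + ε) *
            ∏ i ∈ Finset.Icc 2 n,
              (digit n (j : ℕ) i + digit n (k : ℕ) i + digit n (k : ℕ) (i - 1))) % 2 : ℕ) := by
  exact ⟨keyB n hn ε hε j k, keyL n hn ε hε j k⟩
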